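/- For every n ≥ 1 and all u_1, u_2, …, u_n ∈ ℂ, there exist x_1, x_2, …, x_n ∈ ℂ such that p_k(x_1,…,x_n) = u_k for every k ∈ {1,…,n}. -/

import Mathlib

open Finset
open Polynomial

noncomputable def myE (u : ℕ → ℂ) : ℕ → ℂ
  | 0 => 1
  | (k+1) => ((-1:ℂ)^(k+2) / (k+1)) *
      ∑ i ∈ (Finset.range (k+1)).attach, (-1:ℂ)^(i:ℕ) * myE u i * u (k+1 - i)
  decreasing_by exact Finset.mem_range.mp i.2

theorem myE_rec (u : ℕ → ℂ) (k : ℕ) (hk : 1 ≤ k) :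
    (k:ℂ) * myE u k = (-1:ℂ)^(k+1) *
      ∑ a ∈ (antidiagonal k).filter (fun a => a.1 < k), (-1:ℂ)^a.1 * myE u a.1 * u a.2 := by
  obtain ⟨m, rfl⟩ := Nat.exists_eq_add_of_le hk
  rw [add_comm 1 m]
  rw [myE]
  rw [Finset.sum_attach (Finset.range (m+1)) (fun i => (-1:ℂ)^i * myE u i * u (m+1-i))]
  have hco : ∑ a ∈ (antidiagonal (m+1)).filter (fun a => a.1 < m+1),
      (-1:ℂ)^a.1 * myE u a.1 * u a.2
      = ∑ i ∈ Finset.range (m+1), (-1:ℂ)^i * myE u i * u (m+1-i) := by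
    rw [Finset.sum_filter, Finset.Nat.sum_antidiagonal_eq_sum_range_succ_mk,
      Finset.sum_range_succ]
    simp only [lt_self_iff_false, if_false, add_zero]
    refine Finset.sum_congr rfl fun i hi => ?_
    rw [if_pos (Finset.mem_range.mp hi)]
  rw [hco]
  have h1 : ((m+1 : ℕ) : ℂ) ≠ 0 := Nat.cast_ne_zero.mpr (Nat.succ_ne_zero m)
  push_cast at h1 ⊢
  field_simp

theorem u_rec (u : ℕ → ℂ) (k : ℕ) (hk : 1 ≤ k) :
    u k = (-1:ℂ)^(k+1) * k * myE u k -
      ∑ a ∈ (antidiagonal k).filter (fun a => a.1 ∈ Set.Ioo 0 k),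
        (-1:ℂ)^a.1 * myE u a.1 * u a.2 := by
  have h := myE_rec u k hk
  have hsplit : (antidiagonal k).filter (fun a => a.1 < k)
      = insert ((0:ℕ), k) ((antidiagonal k).filter (fun a => a.1 ∈ Set.Ioo 0 k)) := by
    ext a
    simp only [Finset.mem_filter, Finset.mem_insert, Finset.mem_antidiagonal, Set.mem_Ioo]
    constructor
    · rintro ⟨h1, h2⟩
      rcases Nat.eq_zero_or_pos a.1 with h0 | h0
      · left
        obtain ⟨a1, a2⟩ := a
        simp_all
      · right; exact ⟨h1, h0, h2⟩
    · rintro (rfl | ⟨h1, h2, h3⟩)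
      · simp [hk]
        omega
      · exact ⟨h1, h3⟩
  rw [hsplit, Finset.sum_insert (by simp)] at h
  simp only [pow_zero, one_mul, myE] at h
  have hs : ((-1:ℂ)^(k+1))*((-1:ℂ)^(k+1)) = 1 := by
    rw [← pow_add]; exact Even.neg_one_pow ⟨k+1, by ring⟩
  have := congrArg (fun z => (-1:ℂ)^(k+1) * z) h
  simp only [← mul_assoc, hs, one_mul] at this
  rw [this]; ring

theorem tuple_of_multiset (n : ℕ) (s : Multiset ℂ) (hs : Multiset.card s = n) :
    ∃ x : Fin n → ℂ, Multiset.map x Finset.univ.val = s := by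
  have hl : s.toList.length = n := by rw [Multiset.length_toList, hs]
  refine ⟨fun i => s.toList.get (Fin.cast hl.symm i), ?_⟩
  have h2 : Multiset.map (fun i : Fin n => s.toList.get (Fin.cast hl.symm i)) Finset.univ.val
      = ↑(List.ofFn (fun i : Fin n => s.toList.get (Fin.cast hl.symm i))) := by
    rw [List.ofFn_eq_map]; rfl
  rw [h2]
  have h3 : List.ofFn (fun i : Fin n => s.toList.get (Fin.cast hl.symm i)) = s.toList := by
    subst hl; exact List.ofFn_getElem (xs := s.toList)
  rw [h3, Multiset.coe_toList]

theorem stmt18 (n : ℕ) (hn : 1 ≤ n) (u : ℕ → ℂ) :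
    ∃ x : Fin n → ℂ, ∀ k, 1 ≤ k → k ≤ n → ∑ i, x i ^ k = u k := by
  -- the polynomial
  set c : Fin n → ℂ := fun i => (-1:ℂ)^(n-(i:ℕ)) * myE u (n-(i:ℕ)) with hc
  set P : ℂ[X] := X^n + ∑ i : Fin n, C (c i) * X^(i:ℕ) with hP
  have hQ : (∑ i : Fin n, C (c i) * X^(i:ℕ)).degree < (n : WithBot ℕ) := degree_sum_fin_lt c
  have hmonic : P.Monic := monic_X_pow_add hQ
  have hdeg : P.natDegree = n := by
    have : P.degree = n := by
      rw [hP, degree_add_eq_left_of_degree_lt (by rwa [degree_X_pow]), degree_X_pow]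
    exact natDegree_eq_of_degree_eq_some this
  have hsplits : P.Splits := IsAlgClosed.splits P
  have hcard : Multiset.card P.roots = n := by
    rw [← hdeg]; exact (splits_iff_card_roots).1 hsplits
  -- coefficients
  have hcoeff : ∀ m < n, P.coeff m = (-1:ℂ)^(n-m) * myE u (n-m) := by
    intro m hm
    rw [hP, coeff_add, coeff_X_pow, if_neg (Nat.ne_of_lt hm)]
    rw [finset_sum_coeff]
    simp only [coeff_C_mul, coeff_X_pow]
    rw [Fin.sum_univ_eq_sum_range (fun i => (-1:ℂ)^(n-i) * myE u (n-i) * if m = i then 1 else 0)]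
    simp only [mul_ite, mul_one, mul_zero]
    rw [Finset.sum_ite_eq (Finset.range n) m (fun i => (-1:ℂ)^(n-i) * myE u (n-i)),
      if_pos (Finset.mem_range.mpr hm), zero_add]
  -- esymm of roots
  have hesymm : ∀ j, 1 ≤ j → j ≤ n → P.roots.esymm j = myE u j := by
    intro j hj1 hjn
    have hnj : n - j < n := by omega
    have h1 := Polynomial.coeff_eq_esymm_roots_of_splits hsplits (k := n - j) (by omega)
    rw [hmonic.leadingCoeff, one_mul, hdeg] at h1
    have hjj : n - (n - j) = j := by omega
    rw [hjj] at h1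
    rw [hcoeff _ hnj, hjj] at h1
    have hne : ((-1:ℂ)^j) ≠ 0 := by simp
    exact mul_left_cancel₀ hne h1.symm
  -- the roots as a tuple
  obtain ⟨x, hmap⟩ := tuple_of_multiset n P.roots hcard
  refine ⟨x, ?_⟩
  -- Newton for x
  have hpsum : ∀ k : ℕ, (MvPolynomial.aeval x) (MvPolynomial.psum (Fin n) ℂ k) = ∑ i, x i ^ k := by
    intro k
    simp [MvPolynomial.psum, map_sum]
  have hes : ∀ j : ℕ, (MvPolynomial.aeval x) (MvPolynomial.esymm (Fin n) ℂ j) = P.roots.esymm j := by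
    intro j
    rw [MvPolynomial.aeval_esymm_eq_multiset_esymm, hmap]
  -- main induction
  intro k
  induction k using Nat.strong_induction_on with
  | _ k ih =>
  intro hk1 hkn
  have hnewton := congrArg (MvPolynomial.aeval x)
    (MvPolynomial.psum_eq_mul_esymm_sub_sum (Fin n) ℂ k (by omega))
  simp only [map_sub, map_mul, map_pow, map_neg, map_one, map_natCast, map_sum, hpsum, hes]
    at hnewton
  rw [hnewton, u_rec u k hk1]
  rw [hesymm k hk1 hkn]
  congr 1
  refine Finset.sum_congr rfl fun a ha => ?_
  simp only [Finset.mem_filter, Finset.HasAntidiagonal.mem_antidiagonal, Set.mem_Ioo] at ha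
  obtain ⟨hsum, h0, hlt⟩ := ha
  rw [hesymm a.1 h0 (by omega), ih a.2 (by omega) (by omega) (by omega)]
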